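/- 𝔰𝔱 ≤ 𝔰𝔱'. -/

import Mathlib

open Cardinal Set

/-- `X` is a `𝔰𝔱_l`-family on (the canonical type of order type) `l`:
a collection of countably infinite subsets of `l` such that every subset of
cardinality `ℵ₁` contains a member of `X`. -/
def IsStickFam (l : Cardinal) (X : Set (Set l.ord.ToType)) : Prop :=
  (∀ x ∈ X, #x = ℵ₀) ∧
    ∀ y : Set l.ord.ToType, #y = aleph 1 → ∃ x ∈ X, x ⊆ y

/-- The cardinal `𝔰𝔱_l`. -/
noncomputable def stickL (l : Cardinal) : Cardinal :=
  sInf {c | ∃ X : Set (Set l.ord.ToType), IsStickFam l X ∧ #X = c}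

/-- The cardinal `𝔰𝔱` (`= 𝔰𝔱_{ℵ₁}`). -/
noncomputable def stick : Cardinal := stickL (aleph 1)

/-- The cardinal `𝔰𝔱'`: the least `κ ≥ ℵ₁` carrying a stick family of size `κ`. -/
noncomputable def stick' : Cardinal :=
  sInf {k | aleph 1 ≤ k ∧ ∃ X : Set (Set k.ord.ToType), IsStickFam k X ∧ #X = k}

lemma stick'_set_nonempty :
    {k | aleph 1 ≤ k ∧ ∃ X : Set (Set k.ord.ToType), IsStickFam k X ∧ #X = k}.Nonempty := by
  set κ : Cardinal := 2 ^ aleph 1 with hκ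
  have hκ1 : aleph 1 ≤ κ := (cantor (aleph 1)).le
  have hκ0 : ℵ₀ < κ := aleph0_lt_aleph_one.trans_le hκ1
  set T := κ.ord.ToType with hT
  have hmkT : #T = κ := mk_ord_toType κ
  have hinf : Infinite T := by
    rw [infinite_iff, hmkT]; exact hκ0.le
  refine ⟨κ, hκ1, {s : Set T | #s = ℵ₀}, ⟨fun x hx => hx, ?_⟩, ?_⟩
  · intro y hy
    have : ℵ₀ ≤ #y := by rw [hy]; exact aleph0_le_aleph 1
    obtain ⟨p, hpy, hp⟩ := le_mk_iff_exists_subset.mp this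
    exact ⟨p, hp, hpy⟩
  · apply le_antisymm
    · have hsub : {s : Set T | #s = ℵ₀} ⊆ Set.range (Set.range : (ℕ → T) → Set T) := by
        intro s hs
        obtain ⟨e⟩ : Nonempty (ℕ ≃ s) := lift_mk_eq'.mp (by simpa using (show #s = ℵ₀ from hs).symm)
        refine ⟨fun n => (e n : T), ?_⟩
        ext t
        constructor
        · rintro ⟨n, rfl⟩; exact (e n).2
        · intro ht; exact ⟨e.symm ⟨t, ht⟩, by simp⟩
      calc #{s : Set T | #s = ℵ₀} ≤ #(Set.range (Set.range : (ℕ → T) → Set T)) :=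
            mk_le_mk_of_subset hsub
        _ ≤ #(ℕ → T) := mk_range_le
        _ = κ := by
            rw [mk_arrow, mk_nat, lift_aleph0, lift_id', hmkT, hκ, ← power_mul,
              mul_aleph0_eq (aleph0_le_aleph 1)]
    · have : ℵ₀ ≤ #(univ : Set T) := by rw [mk_univ, hmkT]; exact hκ0.le
      obtain ⟨s₀, -, hs₀⟩ := le_mk_iff_exists_subset.mp this
      have hs₀lt : #s₀ < #T := by rw [hmkT, hs₀]; exact hκ0
      have hcompl : #(↥s₀ᶜ) = κ := by rw [mk_compl_of_infinite s₀ hs₀lt, hmkT]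
      refine le_of_eq hcompl.symm |>.trans ?_
      refine mk_le_of_injective (f := fun a : ↥s₀ᶜ =>
        (⟨insert a.1 s₀, ?_⟩ : {s : Set T | #s = ℵ₀})) ?_
      · rw [Set.mem_setOf_eq, mk_insert a.2, hs₀, add_one_eq le_rfl]
      · rintro ⟨a, ha⟩ ⟨b, hb⟩ h
        simp only [Subtype.mk.injEq] at h ⊢
        have : a ∈ insert b s₀ := h ▸ Set.mem_insert a s₀
        rcases this with h' | h'
        · exact h'
        · exact absurd h' ha

lemma stick_le_of_fam {k : Cardinal} (hk : aleph 1 ≤ k)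
    {X : Set (Set k.ord.ToType)} (hX : IsStickFam k X) : stick ≤ #X := by
  obtain ⟨f⟩ : Nonempty ((aleph 1).ord.ToType ↪ k.ord.ToType) := by
    rw [← le_def, mk_ord_toType, mk_ord_toType]; exact hk
  set X' : Set (Set (aleph 1).ord.ToType) :=
    (fun x => f ⁻¹' x) '' {x | x ∈ X ∧ x ⊆ Set.range f} with hX'
  have hfam : IsStickFam (aleph 1) X' := by
    constructor
    · rintro _ ⟨x, ⟨hxX, hxr⟩, rfl⟩
      rw [mk_preimage_of_injective_of_subset_range f x f.injective hxr]
      exact hX.1 x hxX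
    · intro y hy
      have himg : #(f '' y) = aleph 1 := by rw [mk_image_eq f.injective, hy]
      obtain ⟨x, hxX, hxy⟩ := hX.2 (f '' y) himg
      refine ⟨f ⁻¹' x, ⟨x, ⟨hxX, hxy.trans (Set.image_subset_range f y)⟩, rfl⟩, ?_⟩
      calc f ⁻¹' x ⊆ f ⁻¹' (f '' y) := Set.preimage_mono hxy
        _ = y := Set.preimage_image_eq y f.injective
  have h1 : stick ≤ #X' := csInf_le' ⟨X', hfam, rfl⟩
  refine h1.trans ?_
  calc #X' ≤ #{x | x ∈ X ∧ x ⊆ Set.range f} := mk_image_le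
    _ ≤ #X := mk_le_mk_of_subset fun x hx => hx.1

theorem stick_le_stick' : stick ≤ stick' := by
  refine le_csInf stick'_set_nonempty ?_
  rintro k ⟨hk, X, hX, hcard⟩
  exact hcard ▸ stick_le_of_fam hk hX
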